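/- Let μ be a probability measure on the unit circle with infinite support, (Φ_n) its monic orthogonal polynomials, φ_n = Φ_n/‖Φ_n‖_μ its orthonormal polynomials, and α_n = -conj(Φ_{n+1}(0)) its Verblunsky coefficients. Fix 0 < γ < 1 and ζ = e^{iω} on the unit circle, and let ν = (1-γ)μ + γδ_ω. Then the Verblunsky coefficients of ν satisfy α_n(dν) = α_n + (1-|α_n|²)^{1/2} · conj(φ_{n+1}(ζ)) · φ_n^*(ζ) / ((1-γ)γ^{-1} + K_n(ζ)), where K_n(ζ) = Σ_{j=0}^{n} |φ_j(ζ)|². -/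

import Mathlib

open MeasureTheory Polynomial Finset

noncomputable section

set_option linter.unusedSectionVars false
set_option linter.unusedTactic false
set_option linter.unusedVariables false
set_option maxHeartbeats 1000000

open scoped ComplexConjugate

/-- The `L²(μ)` inner product `⟨f,g⟩_μ = ∫ conj (f z) * g z dμ(z)`. -/
def mInner (μ : Measure ℂ) (f g : ℂ → ℂ) : ℂ :=
  ∫ z, (starRingEnd ℂ) (f z) * g z ∂μ

/-- The `L²(μ)` norm `‖f‖_μ = (∫ |f z|² dμ(z))^{1/2}`. -/
def mNorm (μ : Measure ℂ) (f : ℂ → ℂ) : ℝ :=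
  Real.sqrt (∫ z, ‖f z‖ ^ 2 ∂μ)

/-- `Φ` is the family of monic orthogonal polynomials for `μ`:
`Φ n` is monic of degree `n`, and distinct `Φ`'s are orthogonal in `L²(μ)`. -/
def IsMonicOPS (μ : Measure ℂ) (Φ : ℕ → Polynomial ℂ) : Prop :=
  (∀ n, (Φ n).Monic ∧ (Φ n).natDegree = n) ∧
    ∀ m n, m ≠ n →
      mInner μ (fun z => (Φ m).eval z) (fun z => (Φ n).eval z) = 0

/-- `μ` is a measure on the unit circle `∂𝔻 = {z : ℂ | |z| = 1}`. -/
def OnCircle (μ : Measure ℂ) : Prop := μ {z : ℂ | ‖z‖ = 1}ᶜ = 0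

/-- The (closed) support of `μ` is an infinite set: every closed set of
full measure is infinite. -/
def InfiniteSupport (μ : Measure ℂ) : Prop :=
  ∀ t : Set ℂ, IsClosed t → μ tᶜ = 0 → t.Infinite

/-- inner product of two polynomials -/
def pInner (ρ : Measure ℂ) (P Q : Polynomial ℂ) : ℂ :=
  ∫ z, conj (P.eval z) * Q.eval z ∂ρ

lemma mInner_eq_pInner (ρ : Measure ℂ) (P Q : Polynomial ℂ) :
    mInner ρ (fun z => P.eval z) (fun z => Q.eval z) = pInner ρ P Q := rfl

section Circle

variable {ρ : Measure ℂ} [IsFiniteMeasure ρ]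

lemma ae_circle (hc : OnCircle ρ) : ∀ᵐ z ∂ρ, ‖z‖ = 1 := by
  rw [ae_iff]; simpa [OnCircle, Set.compl_setOf] using hc

lemma integrable_circle (hc : OnCircle ρ) {f : ℂ → ℂ} (hf : Continuous f) :
    Integrable f ρ := by
  obtain ⟨C, hC⟩ := (isCompact_sphere (0:ℂ) 1).exists_bound_of_continuousOn hf.continuousOn
  refine Integrable.mono' (integrable_const C) hf.aestronglyMeasurable ?_
  filter_upwards [ae_circle hc] with z hz
  exact hC z (by simpa [Metric.mem_sphere, dist_eq_norm] using hz)

lemma integrable_pInner (hc : OnCircle ρ) (P Q : Polynomial ℂ) :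
    Integrable (fun z => conj (P.eval z) * Q.eval z) ρ :=
  integrable_circle hc ((Complex.continuous_conj.comp P.continuous).mul Q.continuous)

end Circle

variable {ρ : Measure ℂ} [IsFiniteMeasure ρ]

lemma pInner_add_right (hc : OnCircle ρ) (P Q R : Polynomial ℂ) :
    pInner ρ P (Q + R) = pInner ρ P Q + pInner ρ P R := by
  unfold pInner
  rw [← integral_add (integrable_pInner hc P Q) (integrable_pInner hc P R)]
  simp [mul_add]

lemma pInner_smul_right (c : ℂ) (P Q : Polynomial ℂ) :
    pInner ρ P (c • Q) = c * pInner ρ P Q := by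
  unfold pInner
  rw [← integral_const_mul]
  congr 1; funext z; simp [smul_eq_mul]; ring

lemma pInner_smul_left (c : ℂ) (P Q : Polynomial ℂ) :
    pInner ρ (c • P) Q = conj c * pInner ρ P Q := by
  unfold pInner
  rw [← integral_const_mul]
  congr 1; funext z; simp [smul_eq_mul]; ring

lemma pInner_conj (P Q : Polynomial ℂ) : conj (pInner ρ P Q) = pInner ρ Q P := by
  unfold pInner
  rw [← integral_conj]
  simp [mul_comm]

lemma pInner_sub_right (hc : OnCircle ρ) (P Q R : Polynomial ℂ) :
    pInner ρ P (Q - R) = pInner ρ P Q - pInner ρ P R := by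
  unfold pInner
  rw [← integral_sub (integrable_pInner hc P Q) (integrable_pInner hc P R)]
  simp [mul_sub]

lemma pInner_sub_left (hc : OnCircle ρ) (P Q R : Polynomial ℂ) :
    pInner ρ (Q - R) P = pInner ρ Q P - pInner ρ R P := by
  rw [← pInner_conj, pInner_sub_right hc, map_sub, pInner_conj, pInner_conj]

lemma pInner_add_left (hc : OnCircle ρ) (P Q R : Polynomial ℂ) :
    pInner ρ (Q + R) P = pInner ρ Q P + pInner ρ R P := by
  rw [← pInner_conj, pInner_add_right hc, map_add, pInner_conj, pInner_conj]

lemma pInner_sum_right (hc : OnCircle ρ) (P : Polynomial ℂ) (s : Finset ℕ)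
    (Q : ℕ → Polynomial ℂ) :
    pInner ρ P (∑ j ∈ s, Q j) = ∑ j ∈ s, pInner ρ P (Q j) := by
  induction s using Finset.induction with
  | empty => unfold pInner; simp
  | insert j s hj ih =>
      rw [Finset.sum_insert hj, Finset.sum_insert hj, pInner_add_right hc, ih]

lemma pInner_sum_left (hc : OnCircle ρ) (P : Polynomial ℂ) (s : Finset ℕ)
    (Q : ℕ → Polynomial ℂ) :
    pInner ρ (∑ j ∈ s, Q j) P = ∑ j ∈ s, pInner ρ (Q j) P := by
  rw [← pInner_conj, pInner_sum_right hc, map_sum]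
  simp only [pInner_conj]

lemma pInner_self (P : Polynomial ℂ) :
    pInner ρ P P = ((∫ z, ‖P.eval z‖ ^ 2 ∂ρ : ℝ) : ℂ) := by
  unfold pInner
  rw [show ((∫ z, ‖P.eval z‖ ^ 2 ∂ρ : ℝ) : ℂ) = ∫ z, ((‖P.eval z‖ ^ 2 : ℝ) : ℂ) ∂ρ from
    integral_ofReal.symm]
  congr 1; funext z
  simp [Complex.conj_mul']

lemma pInner_self_eq_mNorm_sq (P : Polynomial ℂ) :
    pInner ρ P P = ((mNorm ρ (fun z => P.eval z) : ℝ) : ℂ) ^ 2 := by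
  rw [pInner_self, mNorm, ← Complex.ofReal_pow,
    Real.sq_sqrt (integral_nonneg fun z => by positivity)]

lemma integral_sq_pos (hc : OnCircle ρ) (hs : InfiniteSupport ρ) {P : Polynomial ℂ}
    (hP : P ≠ 0) : 0 < ∫ z, ‖P.eval z‖ ^ 2 ∂ρ := by
  rcases lt_or_eq_of_le (integral_nonneg (fun z => by positivity :
      (0:ℂ→ℝ) ≤ fun z => ‖P.eval z‖ ^ 2)) with h | h
  · exact h
  · exfalso
    have hint : Integrable (fun z => ‖P.eval z‖ ^ 2) ρ := by
      have : Integrable (fun z => conj (P.eval z) * P.eval z) ρ := integrable_pInner hc P P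
      simpa using this.norm.congr (Filter.Eventually.of_forall fun z => by
        simp [sq])
    have h0 : (fun z => ‖P.eval z‖ ^ 2) =ᵐ[ρ] 0 :=
      (integral_eq_zero_iff_of_nonneg (fun z => by positivity) hint).mp h.symm
    have h0' : ∀ᵐ z ∂ρ, ‖P.eval z‖ ^ 2 = 0 := by
      filter_upwards [h0] with z hz using hz
    have hroots : ρ {z : ℂ | P.eval z = 0}ᶜ = 0 := by
      rw [ae_iff] at h0'
      refine le_antisymm (le_trans (measure_mono ?_) h0'.le) (by simp)
      intro z hz
      simp only [Set.mem_compl_iff, Set.mem_setOf_eq] at hz ⊢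
      intro hzz
      exact hz (by simpa using hzz)
    have hinf : Set.Infinite {z : ℂ | P.eval z = 0} :=
      hs _ (isClosed_eq P.continuous continuous_const) hroots
    exact hP (P.eq_zero_of_infinite_isRoot hinf)

/-- short name for the L² norm of a polynomial -/
def pN (ρ : Measure ℂ) (P : Polynomial ℂ) : ℝ := mNorm ρ (fun z => P.eval z)

lemma pN_nonneg (P : Polynomial ℂ) : 0 ≤ pN ρ P := Real.sqrt_nonneg _

lemma pN_pos (hc : OnCircle ρ) (hs : InfiniteSupport ρ) {P : Polynomial ℂ} (hP : P ≠ 0) :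
    0 < pN ρ P := Real.sqrt_pos.mpr (integral_sq_pos hc hs hP)

lemma pInner_self_eq_pN_sq (P : Polynomial ℂ) :
    pInner ρ P P = ((pN ρ P : ℝ) : ℂ) ^ 2 := pInner_self_eq_mNorm_sq P

lemma monic_rep {Φ : ℕ → Polynomial ℂ} (hmon : ∀ k, (Φ k).Monic ∧ (Φ k).natDegree = k) :
    ∀ n (P : Polynomial ℂ), P.natDegree ≤ n →
      ∃ c : ℕ → ℂ, P = ∑ j ∈ Finset.range (n + 1), c j • Φ j := by
  intro n
  induction n with
  | zero =>
    intro P hP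
    refine ⟨fun _ => P.coeff 0, ?_⟩
    have h0 : Φ 0 = 1 := (Polynomial.Monic.natDegree_eq_zero (hmon 0).1).mp (hmon 0).2
    rw [Polynomial.eq_C_of_natDegree_le_zero hP]
    simp [h0, Polynomial.smul_eq_C_mul]
  | succ n ih =>
    intro P hP
    by_cases h : P.natDegree ≤ n
    · obtain ⟨c, hrep⟩ := ih P h
      refine ⟨fun j => if j = n + 1 then 0 else c j, ?_⟩
      rw [Finset.sum_range_succ]
      beta_reduce
      rw [if_pos rfl, zero_smul, add_zero, hrep]
      refine Finset.sum_congr rfl fun j hj => ?_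
      rw [if_neg (by simpa using Nat.ne_of_lt (Finset.mem_range.mp hj))]
    · have hd : P.natDegree = n + 1 := le_antisymm hP (not_le.mp h)
      have hQdeg : (P - P.leadingCoeff • Φ (n + 1)).natDegree ≤ n := by
        rw [Polynomial.natDegree_le_iff_coeff_eq_zero]
        intro m hm
        rw [Polynomial.coeff_sub, Polynomial.coeff_smul, smul_eq_mul]
        rcases eq_or_lt_of_le (Nat.succ_le_of_lt hm) with hm1 | hm1
        · rw [← hm1]
          have h1 : (Φ (n + 1)).coeff (n + 1) = 1 := by
            have := (hmon (n + 1)).1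
            rw [Polynomial.Monic.def, Polynomial.leadingCoeff, (hmon (n + 1)).2] at this
            exact this
          have h2 : P.coeff (n + 1) = P.leadingCoeff := by
            rw [Polynomial.leadingCoeff, hd]
          rw [h1, h2, mul_one, sub_self]
        · rw [Polynomial.coeff_eq_zero_of_natDegree_lt (by omega),
            Polynomial.coeff_eq_zero_of_natDegree_lt (by rw [(hmon (n + 1)).2]; omega),
            mul_zero, sub_zero]
      obtain ⟨c, hrep⟩ := ih _ hQdeg
      refine ⟨fun j => if j = n + 1 then P.leadingCoeff else c j, ?_⟩
      rw [Finset.sum_range_succ]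
      beta_reduce
      rw [if_pos rfl]
      have : ∑ j ∈ Finset.range (n + 1), (if j = n + 1 then P.leadingCoeff else c j) • Φ j
          = P - P.leadingCoeff • Φ (n + 1) := by
        rw [hrep]
        refine Finset.sum_congr rfl fun j hj => ?_
        rw [if_neg (by simpa using Nat.ne_of_lt (Finset.mem_range.mp hj))]
      rw [this]; ring

lemma pInner_lower_right (hc : OnCircle ρ) {Φ : ℕ → Polynomial ℂ} (hOPS : IsMonicOPS ρ Φ)
    {m : ℕ} {P : Polynomial ℂ} (hP : P.natDegree < m) : pInner ρ P (Φ m) = 0 := by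
  obtain ⟨c, hrep⟩ := monic_rep hOPS.1 (m - 1) P (by omega)
  have hm : m - 1 + 1 = m := by omega
  rw [hrep, pInner_sum_left hc]
  refine Finset.sum_eq_zero fun j hj => ?_
  rw [pInner_smul_left, ← mInner_eq_pInner, hOPS.2 j m (by have := Finset.mem_range.mp hj; omega),
    mul_zero]

lemma pInner_lower_left (hc : OnCircle ρ) {Φ : ℕ → Polynomial ℂ} (hOPS : IsMonicOPS ρ Φ)
    {m : ℕ} {P : Polynomial ℂ} (hP : P.natDegree < m) : pInner ρ (Φ m) P = 0 := by
  rw [← pInner_conj, pInner_lower_right hc hOPS hP, map_zero]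

lemma conj_mul_self_one {z : ℂ} (hz : ‖z‖ = 1) : conj z * z = 1 := by
  rw [← Complex.normSq_eq_conj_mul_self]
  norm_cast
  simp [Complex.normSq_eq_norm_sq, hz]

lemma conj_mul_norm (w : ℂ) : conj w * w = ((‖w‖ ^ 2 : ℝ) : ℂ) := by
  rw [← Complex.normSq_eq_conj_mul_self]
  norm_cast
  exact Complex.normSq_eq_norm_sq w

lemma reflect_eval {P : Polynomial ℂ} {m : ℕ} (hm : P.natDegree ≤ m) {z : ℂ}
    (hz : ‖z‖ = 1) :
    ((P.reflect m).map (starRingEnd ℂ)).eval z = z ^ m * conj (P.eval z) := by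
  have hdeg : ((P.reflect m).map (starRingEnd ℂ)).natDegree < m + 1 := by
    have h1 : (P.reflect m).natDegree ≤ m := by
      rw [Polynomial.natDegree_le_iff_coeff_eq_zero]
      intro k hk
      rw [Polynomial.coeff_reflect, Polynomial.revAt_eq_self_of_lt hk]
      exact Polynomial.coeff_eq_zero_of_natDegree_lt (lt_of_le_of_lt hm hk)
    have h2 : (Polynomial.map (starRingEnd ℂ) (P.reflect m)).natDegree
        ≤ (P.reflect m).natDegree := Polynomial.natDegree_map_le
    omega
  rw [Polynomial.eval_eq_sum_range' hdeg, Polynomial.eval_eq_sum_range'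
    (Nat.lt_succ_of_le hm), map_sum, Finset.mul_sum]
  simp only [Polynomial.coeff_map, Polynomial.coeff_reflect]
  rw [← Finset.sum_range_reflect (fun k => conj (P.coeff (Polynomial.revAt m k)) * z ^ k) (m + 1)]
  refine Finset.sum_congr rfl fun j hj => ?_
  have hj' : j ≤ m := by have := Finset.mem_range.mp hj; omega
  beta_reduce
  simp only [Nat.add_sub_cancel]
  have hrev : Polynomial.revAt m (m - j) = j := by
    rw [Polynomial.revAt_le (by omega)]
    omega
  have hzpow : z ^ (m - j) = z ^ m * (conj z) ^ j := by
    have h1 : (conj z) ^ j * z ^ j = 1 := by rw [← mul_pow, conj_mul_self_one hz, one_pow]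
    calc z ^ (m - j) = z ^ (m - j) * ((conj z) ^ j * z ^ j) := by rw [h1, mul_one]
    _ = (z ^ (m - j) * z ^ j) * (conj z) ^ j := by ring
    _ = z ^ m * (conj z) ^ j := by rw [← pow_add]; congr 2; omega
  rw [hrev, hzpow, map_mul, map_pow]
  ring

/-- the reversed-conjugated polynomial `P^*` -/
def sP (P : Polynomial ℂ) : Polynomial ℂ := (P.reverse).map (starRingEnd ℂ)

lemma sP_eval_circle {P : Polynomial ℂ} {z : ℂ} (hz : ‖z‖ = 1) :
    (sP P).eval z = z ^ P.natDegree * conj (P.eval z) :=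
  reflect_eval le_rfl hz

lemma natDegree_reflect_map_le {P : Polynomial ℂ} {m : ℕ} (hm : P.natDegree ≤ m) :
    ((P.reflect m).map (starRingEnd ℂ)).natDegree ≤ m := by
  have h1 : (P.reflect m).natDegree ≤ m := by
    rw [Polynomial.natDegree_le_iff_coeff_eq_zero]
    intro k hk
    rw [Polynomial.coeff_reflect, Polynomial.revAt_eq_self_of_lt hk]
    exact Polynomial.coeff_eq_zero_of_natDegree_lt (lt_of_le_of_lt hm hk)
  exact le_trans Polynomial.natDegree_map_le h1

lemma natDegree_sP_le (P : Polynomial ℂ) : (sP P).natDegree ≤ P.natDegree :=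
  natDegree_reflect_map_le le_rfl

lemma sP_coeff_zero (P : Polynomial ℂ) : (sP P).coeff 0 = conj P.leadingCoeff := by
  rw [sP, Polynomial.coeff_map, Polynomial.coeff_zero_reverse]

lemma pInner_X_mul (hc : OnCircle ρ) (P Q : Polynomial ℂ) :
    pInner ρ (Polynomial.X * P) (Polynomial.X * Q) = pInner ρ P Q := by
  unfold pInner
  refine integral_congr_ae ?_
  filter_upwards [ae_circle hc] with z hz
  simp only [Polynomial.eval_mul, Polynomial.eval_X, map_mul]
  calc conj z * conj (P.eval z) * (z * Q.eval z)
      = (conj z * z) * (conj (P.eval z) * Q.eval z) := by ring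
    _ = conj (P.eval z) * Q.eval z := by rw [conj_mul_self_one hz, one_mul]

lemma pInner_X_mul_sP_eq_zero (hc : OnCircle ρ) {Φ : ℕ → Polynomial ℂ}
    (hOPS : IsMonicOPS ρ Φ) {n : ℕ} {p : Polynomial ℂ} (hp : p.natDegree < n) :
    pInner ρ (Polynomial.X * p) (sP (Φ n)) = 0 := by
  obtain ⟨m, rfl⟩ : ∃ m, n = m + 1 := ⟨n - 1, by omega⟩
  have hp' : p.natDegree ≤ m := by omega
  have key : pInner ρ (sP (Φ (m + 1))) (Polynomial.X * p)
      = pInner ρ ((p.reflect m).map (starRingEnd ℂ)) (Φ (m + 1)) := by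
    unfold pInner
    refine integral_congr_ae ?_
    filter_upwards [ae_circle hc] with z hz
    rw [sP_eval_circle hz, reflect_eval hp' hz, (hOPS.1 (m + 1)).2]
    simp only [Polynomial.eval_mul, Polynomial.eval_X, map_mul, map_pow,
      Complex.conj_conj]
    have h1 : conj z * z = 1 := conj_mul_self_one hz
    calc (conj z) ^ (m + 1) * (Φ (m + 1)).eval z * (z * p.eval z)
        = ((conj z * z) * (conj z) ^ m) * ((Φ (m + 1)).eval z * p.eval z) := by
          rw [pow_succ]; ring
      _ = (conj z) ^ m * p.eval z * (Φ (m + 1)).eval z := by rw [h1]; ring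
  have h2 : pInner ρ ((p.reflect m).map (starRingEnd ℂ)) (Φ (m + 1)) = 0 :=
    pInner_lower_right hc hOPS (by have := natDegree_reflect_map_le hp'; omega)
  rw [← pInner_conj, key, h2, map_zero]

/-- Szegő recursion. -/
lemma szego (hc : OnCircle ρ) (hs : InfiniteSupport ρ) {Φ : ℕ → Polynomial ℂ}
    (hOPS : IsMonicOPS ρ Φ) (n : ℕ) :
    Φ (n + 1) = Polynomial.X * Φ n + ((Φ (n + 1)).coeff 0) • sP (Φ n) := by
  set c := (Φ (n + 1)).coeff 0 with hcdef
  set E := Polynomial.X * Φ n + c • sP (Φ n) - Φ (n + 1) with hEdef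
  have hΦmon : ∀ k, (Φ k).Monic := fun k => (hOPS.1 k).1
  have hΦdeg : ∀ k, (Φ k).natDegree = k := fun k => (hOPS.1 k).2
  have hE0 : E.coeff 0 = 0 := by
    rw [hEdef, Polynomial.coeff_sub, Polynomial.coeff_add, Polynomial.mul_coeff_zero,
      Polynomial.coeff_X_zero, zero_mul, Polynomial.coeff_smul, sP_coeff_zero,
      Polynomial.Monic.leadingCoeff (hΦmon n)]
    simp [hcdef]
  have hEdeg : E.natDegree ≤ n := by
    rw [Polynomial.natDegree_le_iff_coeff_eq_zero]
    intro k hk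
    obtain ⟨j, rfl⟩ : ∃ j, k = j + 1 := ⟨k - 1, by omega⟩
    rw [hEdef, Polynomial.coeff_sub, Polynomial.coeff_add, Polynomial.coeff_X_mul,
      Polynomial.coeff_smul]
    have hsp : (sP (Φ n)).coeff (j + 1) = 0 :=
      Polynomial.coeff_eq_zero_of_natDegree_lt
        (lt_of_le_of_lt (natDegree_sP_le (Φ n)) (by rw [hΦdeg]; omega))
    rcases eq_or_lt_of_le (show n ≤ j by omega) with hj | hj
    · rw [hsp, smul_zero, add_zero, ← hj]
      have h1 : (Φ n).coeff n = 1 := by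
        have := Polynomial.Monic.leadingCoeff (hΦmon n)
        rwa [Polynomial.leadingCoeff, hΦdeg] at this
      have h2 : (Φ (n + 1)).coeff (n + 1) = 1 := by
        have := Polynomial.Monic.leadingCoeff (hΦmon (n + 1))
        rwa [Polynomial.leadingCoeff, hΦdeg] at this
      rw [h1, h2, sub_self]
    · rw [hsp, smul_zero, add_zero,
        Polynomial.coeff_eq_zero_of_natDegree_lt (by rw [hΦdeg]; omega),
        Polynomial.coeff_eq_zero_of_natDegree_lt (by rw [hΦdeg]; omega), sub_self]
  have horth : ∀ p : Polynomial ℂ, p.natDegree < n → pInner ρ (Polynomial.X * p) E = 0 := by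
    intro p hp
    rw [hEdef, pInner_sub_right hc, pInner_add_right hc, pInner_smul_right,
      pInner_X_mul hc, pInner_lower_right hc hOPS hp,
      pInner_X_mul_sP_eq_zero hc hOPS hp,
      pInner_lower_right hc hOPS (lt_of_le_of_lt
        (le_trans (Polynomial.natDegree_mul_le)
          (by rw [Polynomial.natDegree_X]; omega)) (Nat.lt_succ_self n))]
    simp
  obtain ⟨D, hD⟩ : Polynomial.X ∣ E := Polynomial.X_dvd_iff.mpr hE0
  have hDzero : D = 0 := by
    by_contra hne
    have hXD : (Polynomial.X * D).natDegree = 1 + D.natDegree := by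
      rw [Polynomial.natDegree_mul Polynomial.X_ne_zero hne, Polynomial.natDegree_X]
    have hDdeg : D.natDegree < n := by
      have : E.natDegree ≤ n := hEdeg
      rw [hD, hXD] at this; omega
    have := horth D hDdeg
    rw [hD, pInner_X_mul hc, pInner_self_eq_pN_sq] at this
    have hpn : (pN ρ D : ℂ) = 0 := by
      have := pow_eq_zero_iff (n := 2) (by norm_num) |>.mp this
      exact this
    have : pN ρ D = 0 := by exact_mod_cast hpn
    exact absurd this (ne_of_gt (pN_pos hc hs hne))
  rw [hDzero, mul_zero] at hD
  have : E = 0 := hD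
  rw [hEdef] at this
  linear_combination (norm := ring_nf) -this

lemma pInner_sP_self (hc : OnCircle ρ) (P : Polynomial ℂ) :
    pInner ρ (sP P) (sP P) = pInner ρ P P := by
  unfold pInner
  refine integral_congr_ae ?_
  filter_upwards [ae_circle hc] with z hz
  rw [sP_eval_circle hz]
  simp only [map_mul, map_pow, Complex.conj_conj]
  calc (conj z) ^ P.natDegree * P.eval z * (z ^ P.natDegree * conj (P.eval z))
      = (conj z * z) ^ P.natDegree * (conj (P.eval z) * P.eval z) := by
        rw [mul_pow]; ring
    _ = conj (P.eval z) * P.eval z := by rw [conj_mul_self_one hz, one_pow, one_mul]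

lemma pN_sq_succ (hc : OnCircle ρ) (hs : InfiniteSupport ρ) {Φ : ℕ → Polynomial ℂ}
    (hOPS : IsMonicOPS ρ Φ) (n : ℕ) :
    (pN ρ (Φ (n + 1))) ^ 2 = (1 - ‖(Φ (n + 1)).coeff 0‖ ^ 2) * (pN ρ (Φ n)) ^ 2 := by
  have hBdeg : (sP (Φ n)).natDegree < n + 1 :=
    lt_of_le_of_lt (natDegree_sP_le (Φ n)) (by rw [(hOPS.1 n).2]; omega)
  have hAB : pInner ρ (sP (Φ n)) (Φ (n + 1)) = 0 := pInner_lower_right hc hOPS hBdeg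
  have hBA : pInner ρ (Φ (n + 1)) (sP (Φ n)) = 0 := pInner_lower_left hc hOPS hBdeg
  have hXe : Polynomial.X * Φ n = Φ (n + 1) - ((Φ (n + 1)).coeff 0) • sP (Φ n) := by
    have := szego hc hs hOPS n
    linear_combination (norm := ring_nf) -this
  have hmain : pInner ρ (Φ n) (Φ n)
      = pInner ρ (Φ (n + 1)) (Φ (n + 1))
        + (conj ((Φ (n + 1)).coeff 0) * (Φ (n + 1)).coeff 0)
          * pInner ρ (sP (Φ n)) (sP (Φ n)) := by
    calc pInner ρ (Φ n) (Φ n) = pInner ρ (Polynomial.X * Φ n) (Polynomial.X * Φ n) :=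
          (pInner_X_mul hc _ _).symm
      _ = pInner ρ (Φ (n + 1) - ((Φ (n + 1)).coeff 0) • sP (Φ n))
            (Φ (n + 1) - ((Φ (n + 1)).coeff 0) • sP (Φ n)) := by rw [hXe]
      _ = _ := by
          simp only [pInner_sub_left hc, pInner_sub_right hc, pInner_smul_left,
            pInner_smul_right, hAB, hBA]
          ring
  rw [pInner_sP_self hc] at hmain
  rw [pInner_self_eq_pN_sq, pInner_self_eq_pN_sq] at hmain
  have hcc : conj ((Φ (n + 1)).coeff 0) * (Φ (n + 1)).coeff 0
      = ((‖(Φ (n + 1)).coeff 0‖ ^ 2 : ℝ) : ℂ) := by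
    rw [← Complex.normSq_eq_conj_mul_self]
    norm_cast
    simp [Complex.normSq_eq_norm_sq]
  rw [hcc] at hmain
  have hreal : pN ρ (Φ n) ^ 2 = pN ρ (Φ (n + 1)) ^ 2
      + ‖(Φ (n + 1)).coeff 0‖ ^ 2 * pN ρ (Φ n) ^ 2 := by exact_mod_cast hmain
  linarith

lemma coeff_zero_norm_lt_one (hc : OnCircle ρ) (hs : InfiniteSupport ρ)
    {Φ : ℕ → Polynomial ℂ} (hOPS : IsMonicOPS ρ Φ) (n : ℕ) :
    ‖(Φ (n + 1)).coeff 0‖ ^ 2 < 1 := by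
  have h1 := pN_sq_succ hc hs hOPS n
  have hΦne : ∀ k, Φ k ≠ 0 := fun k => Polynomial.Monic.ne_zero (hOPS.1 k).1
  have h2 : 0 < pN ρ (Φ (n + 1)) ^ 2 := by
    have := pN_pos hc hs (hΦne (n + 1)); positivity
  have h3 : 0 < pN ρ (Φ n) ^ 2 := by
    have := pN_pos hc hs (hΦne n); positivity
  by_contra hcon
  push_neg at hcon
  rw [h1] at h2
  nlinarith
lemma sqrt_ratio (hc : OnCircle ρ) (hs : InfiniteSupport ρ)
    {Φ : ℕ → Polynomial ℂ} (hOPS : IsMonicOPS ρ Φ) (n : ℕ) :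
    Real.sqrt (1 - ‖(Φ (n + 1)).coeff 0‖ ^ 2) = pN ρ (Φ (n + 1)) / pN ρ (Φ n) := by
  have h1 := pN_sq_succ hc hs hOPS n
  have hΦne : ∀ k, Φ k ≠ 0 := fun k => Polynomial.Monic.ne_zero (hOPS.1 k).1
  have h2 : 0 < pN ρ (Φ (n + 1)) := pN_pos hc hs (hΦne (n + 1))
  have h3 : 0 < pN ρ (Φ n) := pN_pos hc hs (hΦne n)
  rw [show 1 - ‖(Φ (n + 1)).coeff 0‖ ^ 2 = (pN ρ (Φ (n + 1)) / pN ρ (Φ n)) ^ 2 by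
    rw [div_pow, h1, mul_div_assoc, div_self (by positivity), mul_one]]
  exact Real.sqrt_sq (by positivity)

lemma eq_zero_of_pInner_self_zero (hc : OnCircle ρ) (hs : InfiniteSupport ρ)
    {P : Polynomial ℂ} (h : pInner ρ P P = 0) : P = 0 := by
  by_contra hne
  rw [pInner_self_eq_pN_sq] at h
  have : (pN ρ P : ℂ) = 0 := pow_eq_zero_iff (n := 2) (by norm_num) |>.mp h
  have : pN ρ P = 0 := by exact_mod_cast this
  exact absurd this (ne_of_gt (pN_pos hc hs hne))

/-- the kernel polynomial `K_n(·, ζ)` (unnormalized weights) -/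
def Kpoly (ρ : Measure ℂ) (Φ : ℕ → Polynomial ℂ) (ζ : ℂ) (n : ℕ) : Polynomial ℂ :=
  ∑ j ∈ Finset.range (n + 1), (conj ((Φ j).eval ζ) / ((pN ρ (Φ j) : ℝ) : ℂ) ^ 2) • Φ j

lemma natDegree_Kpoly_le {Φ : ℕ → Polynomial ℂ} (hmon : ∀ k, (Φ k).Monic ∧ (Φ k).natDegree = k)
    (ζ : ℂ) (n : ℕ) : (Kpoly ρ Φ ζ n).natDegree ≤ n := by
  rw [Polynomial.natDegree_le_iff_coeff_eq_zero]
  intro k hk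
  rw [Kpoly, Polynomial.finset_sum_coeff]
  refine Finset.sum_eq_zero fun j hj => ?_
  rw [Polynomial.coeff_smul, Polynomial.coeff_eq_zero_of_natDegree_lt
    (by rw [(hmon j).2]; have := Finset.mem_range.mp hj; omega), smul_zero]

lemma pInner_diag (hc : OnCircle ρ) {Φ : ℕ → Polynomial ℂ} (hOPS : IsMonicOPS ρ Φ)
    (i j : ℕ) : pInner ρ (Φ i) (Φ j) = if i = j then ((pN ρ (Φ j) : ℝ) : ℂ) ^ 2 else 0 := by
  by_cases h : i = j
  · subst h; rw [if_pos rfl, pInner_self_eq_pN_sq]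
  · rw [if_neg h, ← mInner_eq_pInner]; exact hOPS.2 i j h

lemma Kpoly_reproducing (hc : OnCircle ρ) (hs : InfiniteSupport ρ) {Φ : ℕ → Polynomial ℂ}
    (hOPS : IsMonicOPS ρ Φ) (ζ : ℂ) {n : ℕ} {P : Polynomial ℂ} (hP : P.natDegree ≤ n) :
    pInner ρ P (Kpoly ρ Φ ζ n) = conj (P.eval ζ) := by
  obtain ⟨c, hrep⟩ := monic_rep hOPS.1 n P hP
  have hΦne : ∀ k, Φ k ≠ 0 := fun k => Polynomial.Monic.ne_zero (hOPS.1 k).1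
  have hpNne : ∀ k, ((pN ρ (Φ k) : ℝ) : ℂ) ^ 2 ≠ 0 := fun k => by
    have := pN_pos hc hs (hΦne k)
    simp only [ne_eq, pow_eq_zero_iff, Complex.ofReal_eq_zero]
    norm_num
    intro h; rw [h] at this; exact lt_irrefl 0 this
  rw [hrep, Kpoly, pInner_sum_left hc]
  have hterm : ∀ j ∈ Finset.range (n + 1),
      pInner ρ (c j • Φ j)
        (∑ i ∈ Finset.range (n + 1), (conj ((Φ i).eval ζ) / ((pN ρ (Φ i) : ℝ) : ℂ) ^ 2) • Φ i)
      = conj (c j) * conj ((Φ j).eval ζ) := by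
    intro j hj
    rw [pInner_smul_left, pInner_sum_right hc]
    rw [Finset.sum_eq_single j]
    · rw [pInner_smul_right, pInner_diag hc hOPS, if_pos rfl]
      rw [div_mul_cancel₀ _ (hpNne j)]
    · intro i hi hij
      rw [pInner_smul_right, pInner_diag hc hOPS, if_neg (by omega)]
      simp
    · intro h; exact absurd hj h
  rw [Finset.sum_congr rfl hterm]
  rw [Polynomial.eval_finset_sum, map_sum]
  refine Finset.sum_congr rfl fun j hj => ?_
  rw [Polynomial.eval_smul, smul_eq_mul, map_mul]

lemma Kpoly_eval_self {Φ : ℕ → Polynomial ℂ} (ζ : ℂ) (n : ℕ) :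
    (Kpoly ρ Φ ζ n).eval ζ
      = ((∑ j ∈ Finset.range (n + 1), ‖(Φ j).eval ζ‖ ^ 2 / (pN ρ (Φ j)) ^ 2 : ℝ) : ℂ) := by
  rw [Kpoly, Polynomial.eval_finset_sum, Complex.ofReal_sum]
  refine Finset.sum_congr rfl fun j hj => ?_
  rw [Polynomial.eval_smul, smul_eq_mul]
  rw [div_mul_eq_mul_div, Complex.ofReal_div]
  congr 1
  · rw [← Complex.normSq_eq_conj_mul_self]
    norm_cast
    simp [Complex.normSq_eq_norm_sq]
  · norm_cast

lemma Kpoly_eval_zero_conj {Φ : ℕ → Polynomial ℂ} (ζ : ℂ) (n : ℕ) :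
    conj ((Kpoly ρ Φ ζ n).eval 0)
      = ∑ j ∈ Finset.range (n + 1),
          (Φ j).eval ζ * conj ((Φ j).eval 0) / ((pN ρ (Φ j) : ℝ) : ℂ) ^ 2 := by
  rw [Kpoly, Polynomial.eval_finset_sum, map_sum]
  refine Finset.sum_congr rfl fun j hj => ?_
  rw [Polynomial.eval_smul, smul_eq_mul, map_mul, map_div₀]
  simp only [Complex.conj_conj]
  rw [← Complex.ofReal_pow, Complex.conj_ofReal, Complex.ofReal_pow]
  ring

lemma szego_eval (hc : OnCircle ρ) (hs : InfiniteSupport ρ) {Φ : ℕ → Polynomial ℂ}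
    (hOPS : IsMonicOPS ρ Φ) (n : ℕ) (z : ℂ) :
    (Φ (n + 1)).eval z = z * (Φ n).eval z + (Φ (n + 1)).coeff 0 * (sP (Φ n)).eval z := by
  conv_lhs => rw [szego hc hs hOPS n]
  rw [Polynomial.eval_add, Polynomial.eval_mul, Polynomial.eval_X, Polynomial.eval_smul,
    smul_eq_mul]

lemma sP_succ_eval (hc : OnCircle ρ) (hs : InfiniteSupport ρ) {Φ : ℕ → Polynomial ℂ}
    (hOPS : IsMonicOPS ρ Φ) (n : ℕ) {ζ : ℂ} (hζ : ‖ζ‖ = 1) :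
    (sP (Φ (n + 1))).eval ζ
      = (sP (Φ n)).eval ζ + conj ((Φ (n + 1)).coeff 0) * ζ * (Φ n).eval ζ := by
  have h1 : conj ζ * ζ = 1 := conj_mul_self_one hζ
  have hd : ∀ k, (Φ k).natDegree = k := fun k => (hOPS.1 k).2
  rw [sP_eval_circle hζ, hd (n + 1), szego_eval hc hs hOPS n ζ, sP_eval_circle hζ, hd n]
  simp only [map_mul, map_add, map_pow, Complex.conj_conj]
  have hb : conj (ζ ^ n * conj ((Φ n).eval ζ)) = (conj ζ) ^ n * (Φ n).eval ζ := by
    simp only [map_mul, map_pow, Complex.conj_conj]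
  calc ζ ^ (n + 1) * (conj ζ * conj ((Φ n).eval ζ)
        + conj ((Φ (n + 1)).coeff 0) * (conj ζ ^ n * (Φ n).eval ζ))
      = (conj ζ * ζ) * (ζ ^ n * conj ((Φ n).eval ζ))
        + conj ((Φ (n + 1)).coeff 0) * ((conj ζ * ζ) ^ n * (ζ * (Φ n).eval ζ)) := by
        rw [mul_pow]; ring
    _ = ζ ^ n * conj ((Φ n).eval ζ) + conj ((Φ (n + 1)).coeff 0) * ζ * (Φ n).eval ζ := by
        rw [h1]; ring

lemma star_identity (hc : OnCircle ρ) (hs : InfiniteSupport ρ) {Φ : ℕ → Polynomial ℂ}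
    (hOPS : IsMonicOPS ρ Φ) {ζ : ℂ} (hζ : ‖ζ‖ = 1) (n : ℕ) :
    ∑ j ∈ Finset.range (n + 1),
        (Φ j).eval ζ * conj ((Φ j).eval 0) / ((pN ρ (Φ j) : ℝ) : ℂ) ^ 2
      = (sP (Φ n)).eval ζ / ((pN ρ (Φ n) : ℝ) : ℂ) ^ 2 := by
  have hΦne : ∀ k, Φ k ≠ 0 := fun k => Polynomial.Monic.ne_zero (hOPS.1 k).1
  have hpNne : ∀ k, ((pN ρ (Φ k) : ℝ) : ℂ) ^ 2 ≠ 0 := fun k => by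
    have := pN_pos hc hs (hΦne k)
    intro h
    rw [pow_eq_zero_iff (by norm_num)] at h
    rw [show pN ρ (Φ k) = 0 by exact_mod_cast h] at this
    exact lt_irrefl 0 this
  induction n with
  | zero =>
    have h0 : Φ 0 = 1 := (Polynomial.Monic.natDegree_eq_zero (hOPS.1 0).1).mp
      (hOPS.1 0).2
    rw [Finset.sum_range_one, h0]
    have hrev : (1 : Polynomial ℂ).reverse = 1 := by
      simpa using Polynomial.reverse_C (1 : ℂ)
    simp [sP, hrev]
  | succ n ih =>
    rw [Finset.sum_range_succ, ih, sP_succ_eval hc hs hOPS n hζ]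
    have F1 : (Φ (n + 1)).eval ζ
        = ζ * (Φ n).eval ζ + (Φ (n + 1)).coeff 0 * (sP (Φ n)).eval ζ :=
      szego_eval hc hs hOPS n ζ
    have F3 : ((pN ρ (Φ (n + 1)) : ℝ) : ℂ) ^ 2
        = (1 - ((‖(Φ (n + 1)).coeff 0‖ ^ 2 : ℝ) : ℂ)) * ((pN ρ (Φ n) : ℝ) : ℂ) ^ 2 := by
      have := pN_sq_succ hc hs hOPS n
      push_cast
      exact_mod_cast congrArg (Complex.ofReal) this
    have hcc : conj ((Φ (n + 1)).coeff 0) * (Φ (n + 1)).coeff 0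
        = ((‖(Φ (n + 1)).coeff 0‖ ^ 2 : ℝ) : ℂ) := conj_mul_norm _
    have h00 : (Φ (n + 1)).eval 0 = (Φ (n + 1)).coeff 0 :=
      ((Φ (n + 1)).coeff_zero_eq_eval_zero).symm
    rw [h00, F1]
    rw [div_add_div _ _ (hpNne n) (hpNne (n + 1)), div_eq_div_iff
      (mul_ne_zero (hpNne n) (hpNne (n + 1))) (hpNne (n + 1))]
    linear_combination ((sP (Φ n)).eval ζ * ((pN ρ (Φ (n + 1)) : ℝ) : ℂ) ^ 2
        * ((pN ρ (Φ n) : ℝ) : ℂ) ^ 2) * hcc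
      + ((sP (Φ n)).eval ζ * ((pN ρ (Φ (n + 1)) : ℝ) : ℂ) ^ 2) * F3

lemma onCircle_dirac {ζ : ℂ} (hζ : ‖ζ‖ = 1) : OnCircle (Measure.dirac ζ) := by
  unfold OnCircle
  have hm : MeasurableSet ({z : ℂ | ‖z‖ = 1}ᶜ) :=
    ((isClosed_eq continuous_norm continuous_const).measurableSet).compl
  rw [Measure.dirac_apply' _ hm]
  simp [Set.indicator_apply, hζ]

lemma isFiniteMeasure_smul (c : ENNReal) (hc : c ≠ ⊤) (μ : Measure ℂ) [IsFiniteMeasure μ] :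
    IsFiniteMeasure (c • μ) := by
  refine ⟨?_⟩
  rw [Measure.smul_apply, smul_eq_mul]
  exact ENNReal.mul_lt_top hc.lt_top (measure_lt_top μ _)

lemma pInner_nu (μ : Measure ℂ) [IsFiniteMeasure μ] (hc : OnCircle μ) {γ : ℝ}
    (hγ0 : 0 ≤ 1 - γ) (hγ1 : 0 ≤ γ) {ζ : ℂ} (hζ : ‖ζ‖ = 1) (P Q : Polynomial ℂ) :
    pInner (ENNReal.ofReal (1 - γ) • μ + ENNReal.ofReal γ • Measure.dirac ζ) P Q
      = ((1 - γ : ℝ) : ℂ) * pInner μ P Q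
        + ((γ : ℝ) : ℂ) * (conj (P.eval ζ) * Q.eval ζ) := by
  have hι1 : Integrable (fun z => conj (P.eval z) * Q.eval z)
      (ENNReal.ofReal (1 - γ) • μ) :=
    (integrable_pInner hc P Q).smul_measure ENNReal.ofReal_ne_top
  haveI : IsFiniteMeasure (Measure.dirac ζ) := inferInstance
  have hι2 : Integrable (fun z => conj (P.eval z) * Q.eval z)
      (ENNReal.ofReal γ • Measure.dirac ζ) :=
    (integrable_pInner (onCircle_dirac hζ) P Q).smul_measure ENNReal.ofReal_ne_top
  unfold pInner
  rw [integral_add_measure hι1 hι2, integral_smul_measure, integral_smul_measure,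
    integral_dirac, ENNReal.toReal_ofReal hγ0, ENNReal.toReal_ofReal hγ1]
  simp [Complex.real_smul]

/-- **Theorem 1 (main formula).** Adding the pure point `γ δ_ω` to `(1-γ) μ` changes the
Verblunsky coefficients by
`α_n(dν) = α_n + (1-|α_n|²)^{1/2} conj(φ_{n+1}(ζ)) φ_n^*(ζ) / ((1-γ)γ⁻¹ + K_n(ζ))`. -/
theorem verblunsky_insert_point_mass
    (μ : Measure ℂ) [IsProbabilityMeasure μ] (hcirc : OnCircle μ)
    (hsupp : InfiniteSupport μ)
    (Φ : ℕ → Polynomial ℂ) (hΦ : IsMonicOPS μ Φ)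
    (φ : ℕ → ℂ → ℂ)
    (hφ : ∀ n z, φ n z = (Φ n).eval z / (mNorm μ (fun w => (Φ n).eval w) : ℂ))
    (φs : ℕ → ℂ → ℂ)
    (hφs : ∀ n z, φs n z =
      ((Φ n).reverse.map (starRingEnd ℂ)).eval z / (mNorm μ (fun w => (Φ n).eval w) : ℂ))
    (α : ℕ → ℂ) (hα : ∀ n, α n = -(starRingEnd ℂ) ((Φ (n + 1)).eval 0))
    (γ : ℝ) (hγ0 : 0 < γ) (hγ1 : γ < 1)
    (ω : ℝ) (ζ : ℂ) (hζ : ζ = Complex.exp (ω * Complex.I))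
    (ν : Measure ℂ)
    (hν : ν = ENNReal.ofReal (1 - γ) • μ + ENNReal.ofReal γ • Measure.dirac ζ)
    (Ψ : ℕ → Polynomial ℂ) (hΨ : IsMonicOPS ν Ψ)
    (αν : ℕ → ℂ) (hαν : ∀ n, αν n = -(starRingEnd ℂ) ((Ψ (n + 1)).eval 0))
    (K : ℕ → ℝ) (hK : ∀ n, K n = ∑ j ∈ Finset.range (n + 1), ‖φ j ζ‖ ^ 2)
    (n : ℕ) :
    αν n = α n + ((Real.sqrt (1 - ‖α n‖ ^ 2) : ℝ) : ℂ) /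
        (((1 - γ) * γ⁻¹ + K n : ℝ) : ℂ) * (starRingEnd ℂ) (φ (n + 1) ζ) * φs n ζ := by
  have hζ1 : ‖ζ‖ = 1 := by
    rw [hζ, Complex.norm_exp]
    simp
  -- finiteness of ν
  haveI hfin1 : IsFiniteMeasure (ENNReal.ofReal (1 - γ) • μ) :=
    isFiniteMeasure_smul _ ENNReal.ofReal_ne_top μ
  haveI hfin2 : IsFiniteMeasure (ENNReal.ofReal γ • Measure.dirac ζ) :=
    isFiniteMeasure_smul _ ENNReal.ofReal_ne_top _
  haveI hfinν : IsFiniteMeasure ν := by rw [hν]; infer_instance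
  -- ν is on the circle
  have hcν : OnCircle ν := by
    have h1 : μ {z : ℂ | ‖z‖ = 1}ᶜ = 0 := hcirc
    have h2 : Measure.dirac ζ {z : ℂ | ‖z‖ = 1}ᶜ = 0 := onCircle_dirac hζ1
    show ν {z : ℂ | ‖z‖ = 1}ᶜ = 0
    rw [hν, Measure.add_apply, Measure.smul_apply, Measure.smul_apply, h1, h2]
    simp
  -- ν has infinite support
  have hsν : InfiniteSupport ν := by
    intro t ht h0
    refine hsupp t ht ?_
    rw [hν, Measure.add_apply, Measure.smul_apply, Measure.smul_apply] at h0
    have h1 : ENNReal.ofReal (1 - γ) • μ tᶜ = 0 := by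
      rcases add_eq_zero.mp h0 with ⟨ha, _⟩
      exact ha
    rw [smul_eq_mul] at h1
    rcases mul_eq_zero.mp h1 with ha | hb
    · exact absurd ha (ne_of_gt (ENNReal.ofReal_pos.mpr (by linarith)))
    · exact hb
  -- basic facts about Φ
  have hΦne : ∀ k, Φ k ≠ 0 := fun k => Polynomial.Monic.ne_zero (hΦ.1 k).1
  have hpNpos : ∀ k, 0 < pN μ (Φ k) := fun k => pN_pos hcirc hsupp (hΦne k)
  have hpNCne : ∀ k, ((pN μ (Φ k) : ℝ) : ℂ) ≠ 0 := fun k => by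
    simpa using ne_of_gt (hpNpos k)
  have hpNdef : ∀ m : ℕ, (mNorm μ (fun w => (Φ m).eval w)) = pN μ (Φ m) := fun m => rfl
  -- the kernel sum
  set KS : ℝ := ∑ j ∈ Finset.range (n + 1), ‖(Φ j).eval ζ‖ ^ 2 / (pN μ (Φ j)) ^ 2 with hKS
  have hKn : K n = KS := by
    rw [hK, hKS]
    refine Finset.sum_congr rfl fun j hj => ?_
    rw [hφ j ζ, hpNdef j, norm_div, div_pow]
    congr 1
    rw [show ‖((pN μ (Φ j) : ℝ) : ℂ)‖ = |pN μ (Φ j)| from RCLike.norm_ofReal _,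
      abs_of_nonneg (le_of_lt (hpNpos j))]
  have hKSnonneg : 0 ≤ KS := Finset.sum_nonneg fun j hj => by positivity
  set d : ℝ := (1 - γ) + γ * KS with hd
  have hd0 : 0 < d := by
    have : 0 ≤ γ * KS := by positivity
    rw [hd]; linarith
  set t : ℂ := ((γ / d : ℝ) : ℂ) * (Φ (n + 1)).eval ζ with ht
  set Qc : Polynomial ℂ := Φ (n + 1) - t • Kpoly μ Φ ζ n with hQc
  have hKdeg : (Kpoly μ Φ ζ n).natDegree ≤ n := natDegree_Kpoly_le hΦ.1 ζ n
  -- Qc evaluated at ζ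
  have hQcζ : Qc.eval ζ = (Φ (n + 1)).eval ζ - t * ((KS : ℝ) : ℂ) := by
    rw [hQc, Polynomial.eval_sub, Polynomial.eval_smul, smul_eq_mul, Kpoly_eval_self]
  have hdC : ((d : ℝ) : ℂ) ≠ 0 := by simpa using ne_of_gt hd0
  have hγC : ((γ : ℝ) : ℂ) ≠ 0 := by simpa using ne_of_gt hγ0
  -- orthogonality of Qc in ν
  have horthQ : ∀ P : Polynomial ℂ, P.natDegree ≤ n → pInner ν P Qc = 0 := by
    intro P hP
    have hμ1 : pInner μ P Qc = -(t * conj (P.eval ζ)) := by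
      rw [hQc, pInner_sub_right hcirc, pInner_smul_right,
        pInner_lower_right hcirc hΦ (by omega),
        Kpoly_reproducing hcirc hsupp hΦ ζ hP]
      ring
    rw [hν, pInner_nu μ hcirc (by linarith) (le_of_lt hγ0) hζ1, hμ1, hQcζ]
    have hdenom : t * (((1 - γ : ℝ) : ℂ) + ((γ : ℝ) : ℂ) * ((KS : ℝ) : ℂ))
        = ((γ : ℝ) : ℂ) * (Φ (n + 1)).eval ζ := by
      rw [ht]
      have hdc : ((1 - γ : ℝ) : ℂ) + ((γ : ℝ) : ℂ) * ((KS : ℝ) : ℂ) = ((d : ℝ) : ℂ) := by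
        rw [hd]; push_cast; ring
      rw [hdc]
      have : ((γ / d : ℝ) : ℂ) * ((d : ℝ) : ℂ) = ((γ : ℝ) : ℂ) := by
        push_cast
        exact div_mul_cancel₀ _ hdC
      rw [mul_comm (((γ / d : ℝ) : ℂ)) ((Φ (n + 1)).eval ζ), mul_assoc, this]
      ring
    linear_combination (-(conj (P.eval ζ))) * hdenom
  -- Ψ (n+1) equals Qc
  have hdiffdeg : (Ψ (n + 1) - Qc).natDegree ≤ n := by
    rw [Polynomial.natDegree_le_iff_coeff_eq_zero]
    intro k hk
    rw [Polynomial.coeff_sub, hQc, Polynomial.coeff_sub, Polynomial.coeff_smul,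
      Polynomial.coeff_eq_zero_of_natDegree_lt (lt_of_le_of_lt hKdeg hk), smul_zero, sub_zero]
    rcases eq_or_lt_of_le (Nat.succ_le_of_lt hk) with h1 | h1
    · have e1 : (Ψ (n + 1)).coeff k = 1 := by
        have := Polynomial.Monic.leadingCoeff (hΨ.1 (n + 1)).1
        rw [Polynomial.leadingCoeff, (hΨ.1 (n + 1)).2] at this
        rw [← h1]; exact this
      have e2 : (Φ (n + 1)).coeff k = 1 := by
        have := Polynomial.Monic.leadingCoeff (hΦ.1 (n + 1)).1
        rw [Polynomial.leadingCoeff, (hΦ.1 (n + 1)).2] at this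
        rw [← h1]; exact this
      rw [e1, e2, sub_self]
    · rw [Polynomial.coeff_eq_zero_of_natDegree_lt (by rw [(hΨ.1 (n + 1)).2]; omega),
        Polynomial.coeff_eq_zero_of_natDegree_lt (by rw [(hΦ.1 (n + 1)).2]; omega), sub_self]
  have hΨQ : Ψ (n + 1) = Qc := by
    have hzero : pInner ν (Ψ (n + 1) - Qc) (Ψ (n + 1) - Qc) = 0 := by
      rw [pInner_sub_right hcν, pInner_lower_right hcν hΨ (by omega), horthQ _ hdiffdeg,
        sub_zero]
    have := eq_zero_of_pInner_self_zero hcν hsν hzero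
    exact sub_eq_zero.mp this
  -- final computation
  have hΨ0 : (Ψ (n + 1)).eval 0 = (Φ (n + 1)).eval 0 - t * (Kpoly μ Φ ζ n).eval 0 := by
    rw [hΨQ, hQc, Polynomial.eval_sub, Polynomial.eval_smul, smul_eq_mul]
  have hKstar : conj ((Kpoly μ Φ ζ n).eval 0)
      = (sP (Φ n)).eval ζ / ((pN μ (Φ n) : ℝ) : ℂ) ^ 2 := by
    rw [Kpoly_eval_zero_conj, star_identity hcirc hsupp hΦ hζ1 n]
  have hαν' : αν n = α n + conj t * ((sP (Φ n)).eval ζ / ((pN μ (Φ n) : ℝ) : ℂ) ^ 2) := by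
    rw [hαν n, hΨ0, map_sub, map_mul, hα n, hKstar]
    ring
  have hconjt : conj t = ((γ / d : ℝ) : ℂ) * conj ((Φ (n + 1)).eval ζ) := by
    rw [ht, map_mul, Complex.conj_ofReal]
  have hαnorm : ‖α n‖ = ‖(Φ (n + 1)).coeff 0‖ := by
    rw [hα n, norm_neg, RCLike.norm_conj, Polynomial.coeff_zero_eq_eval_zero]
  have hsqrt : Real.sqrt (1 - ‖α n‖ ^ 2) = pN μ (Φ (n + 1)) / pN μ (Φ n) := by
    rw [hαnorm]
    exact sqrt_ratio hcirc hsupp hΦ n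
  have hKd : (1 - γ) * γ⁻¹ + K n = d / γ := by
    rw [hKn, hd]
    field_simp
  have hsPdef : (Φ n).reverse.map (starRingEnd ℂ) = sP (Φ n) := rfl
  rw [hαν', hsqrt, hKd, hφ (n + 1) ζ, hφs n ζ, hpNdef, hpNdef, hconjt, hsPdef]
  rw [map_div₀, Complex.conj_ofReal]
  push_cast
  field_simp [hpNCne n, hpNCne (n + 1)]
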